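/- Let S = k[α_0, α_1, α_2], let a ⊆ S be an ideal, and let < be a monomial order on S. Then the initial ideal of the saturation of a is contained in the saturation of the initial ideal of a: in_<(sat(a)) ⊆ sat(in_<(a)), where saturation is with respect to m = (α_0, α_1, α_2). -/

import Mathlib

open MvPolynomial

/-- The irrelevant ideal `(α₀, α₁, α₂)` of `S = k[α₀, α₁, α₂]`. -/
noncomputable def irrel (k : Type*) [Field k] : Ideal (MvPolynomial (Fin 3) k) :=
  Ideal.span (Set.range X)

/-- The saturation of an ideal with respect to the irrelevant ideal:
`sat a = {f | ∃ N, 𝔪^N · f ⊆ a}`. -/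
noncomputable def sat (k : Type*) [Field k]
    (a : Ideal (MvPolynomial (Fin 3) k)) : Ideal (MvPolynomial (Fin 3) k) :=
  ⨆ N : ℕ, Submodule.colon a ((((irrel k) ^ N : Ideal (MvPolynomial (Fin 3) k))) : Set (MvPolynomial (Fin 3) k))

/-- The initial ideal of `a` with respect to a monomial order: the ideal generated by
the leading monomials (the monomials whose exponent is maximal in the support) of the
nonzero elements of `a`. -/
noncomputable def initIdeal (k : Type*) [Field k] (m : MonomialOrder (Fin 3))
    (a : Ideal (MvPolynomial (Fin 3) k)) : Ideal (MvPolynomial (Fin 3) k) :=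
  Ideal.span {g | ∃ f ∈ a, f ≠ 0 ∧ ∃ c : Fin 3 →₀ ℕ, c ∈ f.support ∧
    (∀ c' ∈ f.support, m.toSyn c' ≤ m.toSyn c) ∧ g = monomial c (1 : k)}

lemma key_lemma (k : Type*) [Field k] (m : MonomialOrder (Fin 3))
    (a : Ideal (MvPolynomial (Fin 3) k)) :
    ∀ N : ℕ, ∀ f : MvPolynomial (Fin 3) k, f ≠ 0 → ∀ c : Fin 3 →₀ ℕ, c ∈ f.support →
      (∀ c' ∈ f.support, m.toSyn c' ≤ m.toSyn c) →
      f ∈ Submodule.colon a ((((irrel k) ^ N : Ideal (MvPolynomial (Fin 3) k))) : Set (MvPolynomial (Fin 3) k)) →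
      monomial c (1 : k) ∈ Submodule.colon (initIdeal k m a) ((((irrel k) ^ N : Ideal (MvPolynomial (Fin 3) k))) : Set (MvPolynomial (Fin 3) k)) := by
  intro N
  induction N with
  | zero =>
    intro f hf0 c hc hmax hf
    rw [pow_zero, Ideal.one_eq_top] at hf ⊢
    have hfa : f ∈ a := by
      have := Submodule.mem_colon.mp hf 1 trivial
      simpa using this
    have hinit : monomial c (1 : k) ∈ initIdeal k m a :=
      Ideal.subset_span ⟨f, hfa, hf0, c, hc, hmax, rfl⟩
    exact Submodule.mem_colon.mpr fun p _ => by
      simpa [smul_eq_mul] using Ideal.mul_mem_right p _ hinit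
  | succ N ih =>
    intro f hf0 c hc hmax hf
    -- for each variable, X i * f has leading exponent single i 1 + c
    have hIH : ∀ i : Fin 3, monomial (Finsupp.single i 1 + c) (1 : k) ∈
        Submodule.colon (initIdeal k m a) ((((irrel k) ^ N : Ideal (MvPolynomial (Fin 3) k))) : Set (MvPolynomial (Fin 3) k)) := by
      intro i
      have hXf0 : X i * f ≠ 0 := mul_ne_zero (X_ne_zero i) hf0
      have hsupp : (X i * f).support = f.support.map
          (addLeftEmbedding (Finsupp.single i 1)) := support_X_mul i f
      have hcmem : Finsupp.single i 1 + c ∈ (X i * f).support := by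
        rw [hsupp, Finset.mem_map]
        exact ⟨c, hc, rfl⟩
      have hcmax : ∀ c' ∈ (X i * f).support,
          m.toSyn c' ≤ m.toSyn (Finsupp.single i 1 + c) := by
        intro c' hc'
        rw [hsupp, Finset.mem_map] at hc'
        obtain ⟨d, hd, rfl⟩ := hc'
        show m.toSyn (Finsupp.single i 1 + d) ≤ _
        rw [map_add, map_add]
        exact add_le_add_right (hmax d hd) _
      have hXfcolon : X i * f ∈ Submodule.colon a ((((irrel k) ^ N : Ideal (MvPolynomial (Fin 3) k))) : Set (MvPolynomial (Fin 3) k)) := by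
        refine Submodule.mem_colon.mpr fun p hp => ?_
        have hXp : X i * p ∈ (irrel k) ^ (N + 1) := by
          rw [pow_succ']
          exact Ideal.mul_mem_mul (Ideal.subset_span ⟨i, rfl⟩) hp
        have := Submodule.mem_colon.mp hf _ hXp
        simpa [smul_eq_mul, mul_assoc, mul_comm, mul_left_comm] using this
      exact ih (X i * f) hXf0 _ hcmem hcmax hXfcolon
    refine Submodule.mem_colon.mpr fun p hp => ?_
    rw [pow_succ'] at hp
    simp only [smul_eq_mul]
    refine Submodule.mul_induction_on hp (fun x hx y hy => ?_)
      (fun x y hx hy => by simpa [mul_add] using Ideal.add_mem _ hx hy)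
    -- x ∈ irrel, y ∈ irrel ^ N
    refine Submodule.span_induction (p := fun x _ =>
      monomial c (1 : k) * (x * y) ∈ initIdeal k m a) ?_ ?_ ?_ ?_ hx
    · rintro _ ⟨i, rfl⟩
      have := Submodule.mem_colon.mp (hIH i) y hy
      rw [smul_eq_mul] at this
      have heq : monomial c (1 : k) * (X i * y)
          = monomial (Finsupp.single i 1 + c) (1 : k) * y := by
        rw [X, ← mul_assoc, monomial_mul, one_mul, add_comm c (Finsupp.single i 1)]
      rw [heq]
      exact this
    · simpa using Ideal.zero_mem _
    · intro x y _ _ hx hy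
      simpa [add_mul, mul_add] using Ideal.add_mem _ hx hy
    · intro r x _ hx
      have : monomial c (1 : k) * (r • x * y) = r * (monomial c (1:k) * (x * y)) := by
        rw [smul_eq_mul]; ring
      rw [this]
      exact Ideal.mul_mem_left _ _ hx

theorem initIdeal_sat_le_sat_initIdeal (k : Type*) [Field k] [IsAlgClosed k]
    (m : MonomialOrder (Fin 3)) (a : Ideal (MvPolynomial (Fin 3) k)) :
    initIdeal k m (sat k a) ≤ sat k (initIdeal k m a) := by
  rw [initIdeal, Ideal.span_le]
  rintro g ⟨f, hf, hf0, c, hc, hmax, rfl⟩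
  have hdir : Directed (· ≤ ·) fun N : ℕ => Submodule.colon a ((((irrel k) ^ N : Ideal (MvPolynomial (Fin 3) k))) : Set (MvPolynomial (Fin 3) k)) := by
    apply Monotone.directed_le
    intro N M hNM
    exact Submodule.colon_mono le_rfl (Ideal.pow_le_pow_right hNM)
  obtain ⟨N, hN⟩ := (Submodule.mem_iSup_of_directed _ hdir).mp hf
  exact le_iSup (fun N : ℕ => Submodule.colon (initIdeal k m a) ((((irrel k) ^ N : Ideal (MvPolynomial (Fin 3) k))) : Set (MvPolynomial (Fin 3) k))) N
    (key_lemma k m a N f hf0 c hc hmax hN)
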